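/- Let a, b, c be positive reals with b > 1, and let φ^crit be the unique positive root of the equation 1 + φ(1 + √(1 + 2/φ)) = b·exp(−2/(1 + √(1 + 2/φ))). Then the equation f(x) := 1 + a/x − b·e^{−cx} = 0 admits exactly two distinct positive roots if 0 < ac < 2φ^crit, exactly one positive root if ac = 2φ^crit, and no positive root if ac > 2φ^crit. -/

import Mathlib

open Real Set in
set_option maxHeartbeats 1600000 in
theorem stmt_5 (a b c φcrit : ℝ) (ha : 0 < a) (hb : 1 < b) (hc : 0 < c)
    (hφpos : 0 < φcrit)
    (hφroot : 1 + φcrit * (1 + Real.sqrt (1 + 2 / φcrit)) =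
      b * Real.exp (-(2 / (1 + Real.sqrt (1 + 2 / φcrit)))))
    (hφuniq : ∀ φ : ℝ, 0 < φ →
      1 + φ * (1 + Real.sqrt (1 + 2 / φ)) =
        b * Real.exp (-(2 / (1 + Real.sqrt (1 + 2 / φ)))) → φ = φcrit) :
    (a * c < 2 * φcrit →
      {x : ℝ | 0 < x ∧ 1 + a / x - b * Real.exp (-(c * x)) = 0}.encard = 2) ∧
    (a * c = 2 * φcrit →
      {x : ℝ | 0 < x ∧ 1 + a / x - b * Real.exp (-(c * x)) = 0}.encard = 1) ∧
    (2 * φcrit < a * c →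
      {x : ℝ | 0 < x ∧ 1 + a / x - b * Real.exp (-(c * x)) = 0}.encard = 0) := by
  classical
  -- Step 1: existence of u ∈ (0,1) with b(1-u)e^{-u} = 1
  obtain ⟨u, hu0, hu1, hgu⟩ : ∃ u, 0 < u ∧ u < 1 ∧ b * ((1 - u) * Real.exp (-u)) = 1 := by
    have hgc : Continuous fun t : ℝ => b * ((1 - t) * Real.exp (-t)) := by fun_prop
    have hcont : ContinuousOn (fun t => b * ((1 - t) * Real.exp (-t))) (Set.Icc 0 1) :=
      hgc.continuousOn
    have h1mem : (1:ℝ) ∈ Icc ((fun t => b * ((1 - t) * Real.exp (-t))) 1)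
        ((fun t => b * ((1 - t) * Real.exp (-t))) 0) := by
      simp; linarith
    obtain ⟨u, huIcc, hu⟩ := intermediate_value_Icc' (by norm_num : (0:ℝ) ≤ 1) hcont h1mem
    refine ⟨u, ?_, ?_, hu⟩
    · rcases eq_or_lt_of_le huIcc.1 with h | h
      · exfalso; simp [← h] at hu; linarith
      · exact h
    · rcases eq_or_lt_of_le huIcc.2 with h | h
      · exfalso; simp [h] at hu
      · exact h
  -- Step 2: sign facts for g(t) = b(1-t)e^{-t}
  obtain ⟨hggt, hglt⟩ :
      (∀ t, 0 ≤ t → t < u → 1 < b * ((1 - t) * Real.exp (-t))) ∧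
      (∀ t, u < t → b * ((1 - t) * Real.exp (-t)) < 1) := by
    have hgd : ∀ t : ℝ, HasDerivAt (fun t => b * ((1 - t) * Real.exp (-t)))
        (b * ((t - 2) * Real.exp (-t))) t := by
      intro t
      have h1 : HasDerivAt (fun t : ℝ => 1 - t) (-1) t := by
        simpa using (hasDerivAt_id t).const_sub 1
      have h2 : HasDerivAt (fun t : ℝ => Real.exp (-t)) (-Real.exp (-t)) t := by
        simpa [Function.comp_def] using (Real.hasDerivAt_exp (-t)).comp t (hasDerivAt_neg t)
      have := (h1.mul h2).const_mul b
      refine this.congr_deriv ?_; ring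
    have hgc : Continuous fun t : ℝ => b * ((1 - t) * Real.exp (-t)) := by fun_prop
    have hanti : StrictAntiOn (fun t => b * ((1 - t) * Real.exp (-t))) (Icc 0 2) := by
      apply strictAntiOn_of_deriv_neg (convex_Icc _ _) hgc.continuousOn
      intro x hx
      rw [interior_Icc] at hx
      rw [(hgd x).deriv]
      exact mul_neg_of_pos_of_neg (by linarith)
        (mul_neg_of_neg_of_pos (by linarith [hx.2]) (Real.exp_pos _))
    constructor
    · intro t ht0 htu
      have := hanti (Set.mem_Icc.mpr ⟨ht0, by linarith⟩)
        (Set.mem_Icc.mpr ⟨le_of_lt hu0, by linarith⟩) htu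
      simpa [hgu] using this
    · intro t htu
      rcases le_or_gt t 2 with h2 | h2
      · have := hanti (Set.mem_Icc.mpr ⟨le_of_lt hu0, by linarith⟩)
          (Set.mem_Icc.mpr ⟨by linarith, h2⟩) htu
        simpa [hgu] using this
      · have : b * ((1 - t) * Real.exp (-t)) < 0 :=
          mul_neg_of_pos_of_neg (by linarith)
            (mul_neg_of_neg_of_pos (by linarith) (Real.exp_pos _))
        linarith
  -- Step 3: identify 2φcrit
  have h1u : 0 < 1 - u := by linarith
  have hbe : b * Real.exp (-u) = 1 / (1 - u) := by
    rw [eq_div_iff (ne_of_gt h1u)]; linear_combination hgu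
  have hφ : 2 * φcrit = u ^ 2 / (1 - u) := by
    set φ := u ^ 2 / (2 * (1 - u)) with hφdef
    have hφpos' : 0 < φ := by positivity
    have hsq : 1 + 2 / φ = ((2 - u) / u) ^ 2 := by
      rw [hφdef]; field_simp; ring
    have hs : Real.sqrt (1 + 2 / φ) = (2 - u) / u := by
      rw [hsq, Real.sqrt_sq (by apply div_nonneg <;> linarith)]
    have h1s : 1 + (2 - u) / u = 2 / u := by field_simp; ring
    have key : 1 + φ * (1 + Real.sqrt (1 + 2 / φ)) =
        b * Real.exp (-(2 / (1 + Real.sqrt (1 + 2 / φ)))) := by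
      rw [hs, h1s, show (2:ℝ) / (2 / u) = u by field_simp, hbe, hφdef]
      field_simp
      ring
    have := hφuniq φ hφpos' key
    rw [← this, hφdef]
    field_simp
  -- Step 4: the function F and its properties
  set F : ℝ → ℝ := fun x => x + a - b * (x * Real.exp (-(c * x))) with hF
  have hFd : ∀ x : ℝ, HasDerivAt F (1 - b * ((1 - c * x) * Real.exp (-(c * x)))) x := by
    intro x
    have h2 : HasDerivAt (fun x : ℝ => Real.exp (-(c * x))) (-c * Real.exp (-(c * x))) x := by
      have hlin : HasDerivAt (fun x : ℝ => -(c * x)) (-c) x := by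
        simpa using ((hasDerivAt_id x).const_mul c).fun_neg
      simpa [mul_comm, Function.comp_def] using (Real.hasDerivAt_exp (-(c * x))).comp x hlin
    have h3 := ((hasDerivAt_id x).mul h2).const_mul b
    have h4 := ((hasDerivAt_id x).add_const a).sub h3
    simp only [id_eq] at h4
    refine h4.congr_deriv ?_
    ring
  have hFcont : Continuous F := by rw [hF]; fun_prop
  have hxs : 0 < u / c := div_pos hu0 hc
  have hcu : c * (u / c) = u := by field_simp
  have hFmin : c * F (u / c) = a * c - 2 * φcrit := by
    rw [hφ]
    have hFev : F (u / c) = u / c + a - b * (u / c * Real.exp (-u)) := by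
      show u / c + a - b * (u / c * Real.exp (-(c * (u / c)))) = _
      rw [hcu]
    rw [hFev]
    have h1u' : (1:ℝ) - u ≠ 0 := ne_of_gt h1u
    field_simp
    nlinarith [hbe, Real.exp_pos (-u)]
  -- strict monotonicity
  have hA : StrictAntiOn F (Icc 0 (u / c)) := by
    apply strictAntiOn_of_deriv_neg (convex_Icc _ _) hFcont.continuousOn
    intro x hx
    rw [interior_Icc] at hx
    rw [(hFd x).deriv]
    have h1 : 1 < b * ((1 - c * x) * Real.exp (-(c * x))) :=
      hggt (c * x) (le_of_lt (mul_pos hc hx.1))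
        (by rw [← hcu]; exact (mul_lt_mul_iff_right₀ hc).mpr hx.2)
    linarith
  have hM : StrictMonoOn F (Ici (u / c)) := by
    apply strictMonoOn_of_deriv_pos (convex_Ici _) hFcont.continuousOn
    intro x hx
    rw [interior_Ici] at hx
    rw [(hFd x).deriv]
    have h1 : b * ((1 - c * x) * Real.exp (-(c * x))) < 1 :=
      hglt (c * x) (by rw [← hcu]; exact mul_lt_mul_of_pos_left hx hc)
    linarith
  -- membership characterization
  have hmem : ∀ x : ℝ,
      (x ∈ {x : ℝ | 0 < x ∧ 1 + a / x - b * Real.exp (-(c * x)) = 0}) ↔ (0 < x ∧ F x = 0) := by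
    intro x
    simp only [Set.mem_setOf_eq]
    constructor
    · rintro ⟨hx, hfx⟩
      refine ⟨hx, ?_⟩
      have : F x = x * (1 + a / x - b * Real.exp (-(c * x))) := by
        rw [hF]; field_simp
      rw [this, hfx, mul_zero]
    · rintro ⟨hx, hfx⟩
      refine ⟨hx, ?_⟩
      have h1 : F x = x * (1 + a / x - b * Real.exp (-(c * x))) := by
        rw [hF]; field_simp
      rw [h1] at hfx
      rcases mul_eq_zero.mp hfx with h | h
      · exact absurd h (ne_of_gt hx)
      · exact h
  refine ⟨?_, ?_, ?_⟩
  -- Case: a*c < 2φcrit → two roots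
  · intro hlt
    have hm : F (u / c) < 0 := by nlinarith [hFmin]
    -- root in (0, u/c)
    obtain ⟨ε, hε0, hεx, hFε⟩ : ∃ ε, 0 < ε ∧ ε < u / c ∧ 0 < F ε := by
      refine ⟨min (u / c / 2) (a / (2 * b)), by positivity, ?_, ?_⟩
      · calc min (u / c / 2) (a / (2 * b)) ≤ u / c / 2 := min_le_left _ _
          _ < u / c := by linarith
      · set ε := min (u / c / 2) (a / (2 * b)) with hεdef
        have hε0 : 0 < ε := by rw [hεdef]; positivity
        have hεa : ε ≤ a / (2 * b) := min_le_right _ _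
        have hexp : Real.exp (-(c * ε)) ≤ 1 := by
          rw [show (1:ℝ) = Real.exp 0 by simp]
          exact Real.exp_le_exp.mpr (by nlinarith)
        have hle : b * ε * Real.exp (-(c * ε)) ≤ b * ε :=
          mul_le_of_le_one_right (le_of_lt (mul_pos (by linarith) hε0)) hexp
        have hεa' : ε * (2 * b) ≤ a := (le_div_iff₀ (by positivity)).mp hεa
        show 0 < ε + a - b * (ε * Real.exp (-(c * ε)))
        nlinarith [hle, hεa']
    obtain ⟨r₁, hr₁mem, hr₁⟩ : ∃ r₁ ∈ Icc ε (u / c), F r₁ = 0 := by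
      have := intermediate_value_Icc' (le_of_lt hεx) hFcont.continuousOn
        (show (0:ℝ) ∈ Icc (F (u / c)) (F ε) from ⟨le_of_lt hm, le_of_lt hFε⟩)
      obtain ⟨r, hr, hr'⟩ := this
      exact ⟨r, hr, hr'⟩
    have hr₁0 : 0 < r₁ := lt_of_lt_of_le hε0 hr₁mem.1
    have hr₁x : r₁ < u / c := lt_of_le_of_ne hr₁mem.2 (fun h => by rw [h] at hr₁; linarith)
    -- root in (u/c, ∞)
    obtain ⟨X, hXx, hFX⟩ : ∃ X, u / c < X ∧ 0 < F X := by
      refine ⟨max (u / c) (b / c) + 1, by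
        calc u / c ≤ max (u / c) (b / c) := le_max_left _ _
          _ < _ := by linarith, ?_⟩
      set X := max (u / c) (b / c) + 1 with hXdef
      clear_value X
      have hX0 : 0 < X := by
        have : u / c ≤ max (u / c) (b / c) := le_max_left _ _
        rw [hXdef]; linarith [hxs]
      have hXb : b / c < X := by
        have : b / c ≤ max (u / c) (b / c) := le_max_right _ _
        rw [hXdef]; linarith
      have h1 : c * X < Real.exp (c * X) := by nlinarith [Real.add_one_le_exp (c * X)]
      have hEe : Real.exp (-(c * X)) * Real.exp (c * X) = 1 := by
        rw [← Real.exp_add]; simp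
      have h3 : c * X * Real.exp (-(c * X)) < 1 := by
        have := mul_lt_mul_of_pos_left h1 (Real.exp_pos (-(c * X)))
        calc c * X * Real.exp (-(c * X)) = Real.exp (-(c * X)) * (c * X) := by ring
          _ < Real.exp (-(c * X)) * Real.exp (c * X) := this
          _ = 1 := hEe
      have h4 : b * (X * Real.exp (-(c * X))) < b / c := by
        rw [lt_div_iff₀ hc]
        nlinarith [h3, Real.exp_pos (-(c * X))]
      show 0 < X + a - b * (X * Real.exp (-(c * X)))
      linarith [h4, hXb, ha]
    obtain ⟨r₂, hr₂mem, hr₂⟩ : ∃ r₂ ∈ Icc (u / c) X, F r₂ = 0 := by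
      have := intermediate_value_Icc (le_of_lt hXx) hFcont.continuousOn
        (show (0:ℝ) ∈ Icc (F (u / c)) (F X) from ⟨le_of_lt hm, le_of_lt hFX⟩)
      obtain ⟨r, hr, hr'⟩ := this
      exact ⟨r, hr, hr'⟩
    have hr₂x : u / c < r₂ := lt_of_le_of_ne hr₂mem.1 (fun h => by rw [← h] at hr₂; linarith)
    have hset : {x : ℝ | 0 < x ∧ 1 + a / x - b * Real.exp (-(c * x)) = 0} = {r₁, r₂} := by
      ext x
      rw [hmem x]
      constructor
      · rintro ⟨hx0, hFx⟩
        rcases lt_trichotomy x (u / c) with h | h | h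
        · left
          exact hA.injOn ⟨le_of_lt hx0, le_of_lt h⟩
            ⟨le_of_lt hr₁0, hr₁mem.2⟩ (by rw [hFx, hr₁])
        · exfalso; rw [h] at hFx; linarith
        · right
          exact hM.injOn (le_of_lt h) (le_of_lt hr₂x) (by rw [hFx, hr₂])
      · rintro (rfl | rfl)
        · exact ⟨hr₁0, hr₁⟩
        · exact ⟨lt_trans hxs hr₂x, hr₂⟩
    rw [hset]
    exact Set.encard_pair (by intro h; rw [h] at hr₁x; linarith)
  -- Case: a*c = 2φcrit → one root
  · intro heq
    have hm : F (u / c) = 0 := by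
      have : c * F (u / c) = 0 := by rw [hFmin, heq]; ring
      exact (mul_eq_zero.mp this).resolve_left (ne_of_gt hc)
    have hset : {x : ℝ | 0 < x ∧ 1 + a / x - b * Real.exp (-(c * x)) = 0} = {u / c} := by
      ext x
      rw [hmem x]
      simp only [Set.mem_singleton_iff]
      constructor
      · rintro ⟨hx0, hFx⟩
        rcases lt_trichotomy x (u / c) with h | h | h
        · exfalso
          have := hA ⟨le_of_lt hx0, le_of_lt h⟩ ⟨le_of_lt hxs, le_refl _⟩ h
          rw [hFx, hm] at this; linarith
        · exact h
        · exfalso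
          have := hM (le_refl (u / c)) (le_of_lt h) h
          rw [hFx, hm] at this; linarith
      · rintro rfl
        exact ⟨hxs, hm⟩
    rw [hset, Set.encard_singleton]
  -- Case: 2φcrit < a*c → no roots
  · intro hgt
    have hm : 0 < F (u / c) := by nlinarith [hFmin]
    have hset : {x : ℝ | 0 < x ∧ 1 + a / x - b * Real.exp (-(c * x)) = 0} = ∅ := by
      ext x
      rw [hmem x]
      simp only [Set.mem_empty_iff_false, iff_false, not_and]
      intro hx0 hFx
      rcases lt_trichotomy x (u / c) with h | h | h
      · have := hA ⟨le_of_lt hx0, le_of_lt h⟩ ⟨le_of_lt hxs, le_refl _⟩ h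
        rw [hFx] at this; linarith
      · rw [h] at hFx; linarith
      · have := hM (le_refl (u / c)) (le_of_lt h) h
        rw [hFx] at this; linarith
    rw [hset, Set.encard_empty]
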